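/- Let A be a commutative ring with a decreasing separated filtration I_n = ker(A → A_n) arising from an inverse limit A = lim A_n with surjective transition maps A_n → A_{n-1}. If M is a finitely generated A-module, then the natural map M → lim M/(I_n M) is surjective. -/
import Mathlib


universe u v

variable (A : Type u) [CommRing A] (I : ℕ → Ideal A)
  (M : Type v) [AddCommGroup M] [Module A M]

/-- The inverse limit of the quotients `M/(Iₙ M)`: compatible sequences, where
compatibility of `x (n+1)` and `x n` is expressed by the existence of a common lift
(equivalently, `x (n+1)` maps to `x n` under the canonical map). -/
def LimQuot : Type _ :=
  {x : ∀ n, M ⧸ (I n • ⊤ : Submodule A M) //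
    ∀ n, ∃ m : M,
      (Submodule.Quotient.mk m : M ⧸ (I (n + 1) • ⊤ : Submodule A M)) = x (n + 1) ∧
      (Submodule.Quotient.mk m : M ⧸ (I n • ⊤ : Submodule A M)) = x n}

/-- The natural map `M → lim M/(Iₙ M)`. -/
def toLimQuot : M → LimQuot A I M :=
  fun m => ⟨fun _ => Submodule.Quotient.mk m, fun _ => ⟨m, rfl, rfl⟩⟩

/-- Let `A = lim Aₙ` be the inverse limit of an inverse system of commutative rings
with surjective transition maps `φₙ : A_{n+1} → Aₙ`, with projections `πₙ : A → Aₙ`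
and `Iₙ := ker πₙ`.  If `M` is a finitely generated `A`-module then the natural map
`M → lim M/(Iₙ M)` is surjective. -/
theorem stmt11 (B : ℕ → Type u) [∀ n, CommRing (B n)]
    (φ : ∀ n, B (n + 1) →+* B n) (hφ : ∀ n, Function.Surjective (φ n))
    (π : ∀ n, A →+* B n)
    (hcompat : ∀ n, (φ n).comp (π (n + 1)) = π n)
    (hinj : ∀ a : A, (∀ n, π n a = 0) → a = 0)
    (hsurj : ∀ x : ∀ n, B n, (∀ n, φ n (x (n + 1)) = x n) → ∃ a : A, ∀ n, π n a = x n)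
    (hI : ∀ n, I n = RingHom.ker (π n))
    [Module.Finite A M] :
    Function.Surjective (toLimQuot A I M) := by
  rintro ⟨x, hx⟩
  have hx2 := hx
  choose m hm1 hm2 using hx2
  have hle : ∀ n, I (n + 1) ≤ I n := by
    intro n a ha
    rw [hI] at ha ⊢
    have h1 : π n a = φ n (π (n + 1) a) := by rw [← hcompat n]; rfl
    rw [RingHom.mem_ker, h1, ha, map_zero]
  have hIm : ∀ n k, n ≤ k → I k ≤ I n := by
    intro n k h
    induction h with
    | refl => exact le_rfl
    | step h ih => exact le_trans (hle _) ih
  obtain ⟨r, g, hg⟩ := Module.Finite.exists_fin (R := A) (M := M)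
  have hd : ∀ k, m (k + 1) - m k ∈ (I (k + 1) • ⊤ : Submodule A M) :=
    fun k => (Submodule.Quotient.eq _).mp ((hm2 (k + 1)).trans (hm1 k).symm)
  have hd' : ∀ k, ∃ b : Fin r → A, (∀ i, b i ∈ I (k + 1)) ∧
      m (k + 1) - m k = ∑ i, b i • g i := by
    intro k
    have h := hd k
    rw [← hg, Submodule.mem_ideal_smul_span_iff_exists_sum] at h
    obtain ⟨c, hc, hsum⟩ := h
    exact ⟨c, hc, by rw [← hsum, Finsupp.sum_fintype _ _ (fun i => by simp)]⟩
  choose b hb hbsum using hd'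
  have hmn : ∀ n, m n = m 0 + ∑ i, (∑ k ∈ Finset.range n, b k i) • g i := by
    intro n
    induction n with
    | zero => simp
    | succ n ih =>
      have h1 : m (n + 1) = m n + ∑ i, b n i • g i := by
        rw [← hbsum n]; abel
      rw [h1, ih]
      simp [Finset.sum_range_succ, add_smul, Finset.sum_add_distrib, add_assoc]
  have hcomp : ∀ i, ∃ a : A, ∀ n, π n a = π n (∑ k ∈ Finset.range n, b k i) := by
    intro i
    refine hsurj (fun n => π n (∑ k ∈ Finset.range n, b k i)) ?_
    intro n
    have h1 : φ n (π (n + 1) (∑ k ∈ Finset.range (n + 1), b k i)) =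
        π n (∑ k ∈ Finset.range (n + 1), b k i) := by rw [← hcompat n]; rfl
    have h2 : π n (b n i) = 0 := by
      have hm : b n i ∈ I n := hIm n (n + 1) (Nat.le_succ n) (hb n i)
      rwa [hI, RingHom.mem_ker] at hm
    rw [h1, Finset.sum_range_succ, map_add, h2, add_zero]
  choose a ha using hcomp
  refine ⟨m 0 + ∑ i, a i • g i, Subtype.ext (funext fun n => ?_)⟩
  show (Submodule.Quotient.mk (m 0 + ∑ i, a i • g i) :
      M ⧸ (I n • ⊤ : Submodule A M)) = x n
  rw [← hm2 n, Submodule.Quotient.eq, hmn n]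
  have heq : (m 0 + ∑ i, a i • g i) - (m 0 + ∑ i, (∑ k ∈ Finset.range n, b k i) • g i)
      = ∑ i, (a i - ∑ k ∈ Finset.range n, b k i) • g i := by
    simp [sub_smul, Finset.sum_sub_distrib]
  rw [heq]
  refine Submodule.sum_mem _ fun i _ => Submodule.smul_mem_smul ?_ trivial
  rw [hI, RingHom.mem_ker, map_sub, ha, sub_self]
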